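/- (Kadison's inequality) Let Φ be a real-linear map on the real vector space of n×n complex Hermitian matrices that is positive (Φ maps positive-semidefinite matrices to positive-semidefinite matrices) and unital (Φ(I) = I). Then for every Hermitian matrix x, the matrix Φ(x²) − Φ(x)² is positive semidefinite. -/

import Mathlib

open scoped ComplexOrder

lemma posSemidef_zero_aux {n : ℕ} : (0 : Matrix (Fin n) (Fin n) ℂ).PosSemidef := by
  constructor
  · simp [Matrix.IsHermitian]
  · intro v; simp

lemma posSemidef_add_aux {n : ℕ} {A B : Matrix (Fin n) (Fin n) ℂ}
    (hA : A.PosSemidef) (hB : B.PosSemidef) : (A + B).PosSemidef := by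
  refine ⟨hA.1.add hB.1, fun v => ?_⟩
  have := add_nonneg (hA.2 v) (hB.2 v)
  simpa [Matrix.add_mulVec, dotProduct_add, mul_add, add_mul, Finsupp.sum_add] using this

lemma posSemidef_sum_aux {n : ℕ} {ι : Type*} (s : Finset ι)
    (f : ι → Matrix (Fin n) (Fin n) ℂ) (hf : ∀ i ∈ s, (f i).PosSemidef) :
    (∑ i ∈ s, f i).PosSemidef := by
  classical
  induction s using Finset.induction_on with
  | empty => simpa using posSemidef_zero_aux
  | @insert a s' hnot ih =>
      rw [Finset.sum_insert hnot]
      exact posSemidef_add_aux (hf a (by simp)) (ih fun i hi => hf i (by simp [hi]))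

/-- **Kadison's inequality.** Let `Φ` be a real-linear map on the real
vector space of `n × n` complex Hermitian matrices (here realized as a real-linear map
on all matrices that sends Hermitian matrices to Hermitian matrices) that is positive
(maps positive-semidefinite matrices to positive-semidefinite matrices) and unital
(`Φ(I) = I`).  Then for every Hermitian `x`, the matrix `Φ(x²) − Φ(x)²` is positive
semidefinite. -/
theorem kadison_inequality (n : ℕ)
    (Φ : Matrix (Fin n) (Fin n) ℂ →ₗ[ℝ] Matrix (Fin n) (Fin n) ℂ)
    (hherm : ∀ x : Matrix (Fin n) (Fin n) ℂ, x.IsHermitian → (Φ x).IsHermitian)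
    (hpos : ∀ x : Matrix (Fin n) (Fin n) ℂ, x.PosSemidef → (Φ x).PosSemidef)
    (hunital : Φ 1 = 1) :
    ∀ x : Matrix (Fin n) (Fin n) ℂ, x.IsHermitian →
      (Φ (x * x) - Φ x * Φ x).PosSemidef := by
  intro x hx
  classical
  set U : Matrix (Fin n) (Fin n) ℂ := (hx.eigenvectorUnitary : Matrix (Fin n) (Fin n) ℂ) with hUdef
  set lam : Fin n → ℝ := hx.eigenvalues with hlam
  set P : Fin n → Matrix (Fin n) (Fin n) ℂ :=
    fun i => U * Matrix.diagonal (fun j => if j = i then (1:ℂ) else 0) * star U with hPdef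
  have hUU : U * star U = 1 := Matrix.mem_unitaryGroup_iff.mp (hx.eigenvectorUnitary).2
  have hUU' : star U * U = 1 := Matrix.mem_unitaryGroup_iff'.mp (hx.eigenvectorUnitary).2
  -- decomposition of conjugated real diagonal matrices
  have hdec : ∀ d : Fin n → ℝ,
      U * Matrix.diagonal (fun j => ((d j : ℂ))) * star U = ∑ i, d i • P i := by
    intro d
    have hdiag : Matrix.diagonal (fun j => ((d j : ℂ)))
        = ∑ i, d i • Matrix.diagonal (fun j => if j = i then (1:ℂ) else 0) := by
      ext j k
      by_cases hjk : j = k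
      · subst hjk
        simp [Matrix.diagonal_apply, Matrix.sum_apply, Complex.real_smul]
      · simp [Matrix.diagonal_apply_ne _ hjk, Matrix.sum_apply, hjk]
    rw [hdiag, Finset.mul_sum, Finset.sum_mul]
    simp [hPdef, Matrix.mul_smul, Matrix.smul_mul]
  have hofReal : (RCLike.ofReal ∘ lam : Fin n → ℂ) = fun j => ((lam j : ℂ)) := rfl
  have hspec : x = U * Matrix.diagonal (fun j => ((lam j : ℂ))) * star U := by
    conv_lhs => rw [hx.spectral_theorem]
    rw [hofReal, Unitary.conjStarAlgAut_apply]
  have hx_eq : x = ∑ i, lam i • P i := by rw [hspec, hdec]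
  have hx2_eq : x * x = ∑ i, (lam i * lam i) • P i := by
    rw [← hdec (fun i => lam i * lam i)]
    conv_lhs => rw [hspec]
    simp only [Matrix.mul_assoc]
    rw [← Matrix.mul_assoc (star U) U, hUU', Matrix.one_mul,
      ← Matrix.mul_assoc (Matrix.diagonal _) (Matrix.diagonal _), Matrix.diagonal_mul_diagonal]
    congr 2
    ext j
    push_cast
    simp
  set A : Matrix (Fin n) (Fin n) ℂ := Φ x with hAdef
  set Q : Fin n → Matrix (Fin n) (Fin n) ℂ := fun i => Φ (P i) with hQdef
  have hΦx : A = ∑ i, lam i • Q i := by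
    rw [hAdef, hx_eq, map_sum]
    simp [hQdef]
  have hΦx2 : Φ (x * x) = ∑ i, (lam i * lam i) • Q i := by
    rw [hx2_eq, map_sum]
    simp [hQdef]
  have hQ1 : ∑ i, Q i = 1 := by
    have h1 : (∑ i, P i) = 1 := by
      have := hdec (fun _ => 1)
      simp only [one_smul, Complex.ofReal_one] at this
      rw [← this]
      simp [hUU]
    rw [hQdef]
    simp only []
    rw [← map_sum, h1, hunital]
  have hAH : A.IsHermitian := hherm x hx
  set M : Fin n → Matrix (Fin n) (Fin n) ℂ := fun i => lam i • (1 : Matrix (Fin n) (Fin n) ℂ) - A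
    with hMdef
  have hMH : ∀ i, (M i).IsHermitian := by
    intro i
    simp [hMdef, Matrix.IsHermitian, Matrix.conjTranspose_sub, Matrix.conjTranspose_smul, hAH.eq]
  have hQpsd : ∀ i, (Q i).PosSemidef := by
    intro i
    apply hpos
    rw [hPdef]
    simp only [Matrix.star_eq_conjTranspose]
    refine Matrix.PosSemidef.mul_mul_conjTranspose_same ?_ U
    refine Matrix.posSemidef_diagonal_iff.mpr fun j => ?_
    split <;> simp
  have hterm : ∀ i, (M i * Q i * M i).PosSemidef := by
    intro i
    have := (hQpsd i).mul_mul_conjTranspose_same (M i)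
    rwa [(hMH i).eq] at this
  have expand : ∀ i, M i * Q i * M i
      = (lam i * lam i) • Q i - lam i • (Q i * A) - lam i • (A * Q i) + A * Q i * A := by
    intro i
    simp only [hMdef, Matrix.sub_mul, Matrix.mul_sub, Matrix.smul_mul, Matrix.mul_smul,
      Matrix.one_mul, Matrix.mul_one, smul_smul]
    module
  have key : ∑ i, M i * Q i * M i = Φ (x * x) - A * A := by
    calc ∑ i, M i * Q i * M i
        = ∑ i, ((lam i * lam i) • Q i - lam i • (Q i * A) - lam i • (A * Q i) + A * Q i * A) := by
          exact Finset.sum_congr rfl fun i _ => expand i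
      _ = (∑ i, (lam i * lam i) • Q i) - (∑ i, lam i • Q i) * A
            - A * (∑ i, lam i • Q i) + A * (∑ i, Q i) * A := by
          simp only [Finset.sum_add_distrib, Finset.sum_sub_distrib, Finset.sum_mul,
            Finset.mul_sum, Matrix.smul_mul, Matrix.mul_smul, Matrix.mul_assoc]
      _ = Φ (x * x) - A * A - A * A + A * A := by
          rw [← hΦx2, ← hΦx, hQ1, Matrix.mul_one]
      _ = Φ (x * x) - A * A := by abel
  rw [← key]
  exact posSemidef_sum_aux _ _ fun i _ => hterm i
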